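/- Let A = J_m ⊕ J_n with m > n ≥ 1, let B ∈ NilC(A) have canonical rank r ≥ 1 with Turnbull–Aitken parameters satisfying (b_{n−r}, c_{n−r}) ≠ (0,0), (b_i,c_i) = (0,0) for i < n−r, and d_i = a_i for 1 ≤ i ≤ n−r. Then for any X ∈ Stab(A) with diagonal parameters x₀ ≠ 0, w₀ ≠ 0, the conjugate X⁻¹BX has the same canonical rank r; in particular its leading off-diagonal parameters are (b'_{n−r}, c'_{n−r}) = (b_{n−r} w₀ x₀⁻¹, c_{n−r} x₀ w₀⁻¹) ≠ (0,0). -/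

import Mathlib

/-- The k×k nilpotent Jordan block with eigenvalue 0. -/
def jordanBlock (F : Type*) [Field F] (k : ℕ) : Matrix (Fin k) (Fin k) F :=
  fun i j => if (i : ℕ) + 1 = (j : ℕ) then 1 else 0

/-- The direct sum J_m ⊕ J_n, indexed by `Fin m ⊕ Fin n`. -/
def jordanSum (F : Type*) [Field F] (m n : ℕ) :
    Matrix (Fin m ⊕ Fin n) (Fin m ⊕ Fin n) F :=
  Matrix.fromBlocks (jordanBlock F m) 0 0 (jordanBlock F n)

/-- The Turnbull–Aitken block matrix determined by the row-1 parameters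
`a` (top-left m×m upper-triangular Toeplitz block), `b` (top-right m×n TA block),
and the row-(m+1) parameters `c` (bottom-left n×m TA block, whose entries depend
on the arm length j−i−(m−n)) and `d` (bottom-right n×n upper-triangular
Toeplitz block).  This is the general form of a matrix commuting with
J_m ⊕ J_n when m ≥ n. -/
def TAmat {F : Type*} [Field F] (m n : ℕ) (a b c d : ℕ → F) :
    Matrix (Fin m ⊕ Fin n) (Fin m ⊕ Fin n) F :=
  fun p q => match p, q with
  | .inl i, .inl j => if (i : ℕ) ≤ (j : ℕ) then a ((j : ℕ) - (i : ℕ)) else 0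
  | .inl i, .inr j => if (i : ℕ) ≤ (j : ℕ) then b ((j : ℕ) - (i : ℕ)) else 0
  | .inr i, .inl j => if (i : ℕ) + (m - n) ≤ (j : ℕ) then
      c ((j : ℕ) - (i : ℕ) - (m - n)) else 0
  | .inr i, .inr j => if (i : ℕ) ≤ (j : ℕ) then d ((j : ℕ) - (i : ℕ)) else 0

namespace TAaux
open Finset

variable {F : Type*} [Field F]

/-- truncated convolution -/
def conv (f g : ℕ → F) (k : ℕ) : F := ∑ s ∈ range (k+1), f s * g (k - s)

/-- delta sequence -/
def del : ℕ → F := fun k => if k = 0 then 1 else 0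

lemma conv_congr {f g g' : ℕ → F} {k : ℕ} (h : ∀ t ≤ k, g t = g' t) :
    conv f g k = conv f g' k := by
  unfold conv
  refine Finset.sum_congr rfl fun s hs => ?_
  rw [h _ (Nat.sub_le _ _)]

lemma conv_congr_left {f f' g : ℕ → F} {k : ℕ} (h : ∀ t ≤ k, f t = f' t) :
    conv f g k = conv f' g k := by
  unfold conv
  refine Finset.sum_congr rfl fun s hs => ?_
  rw [h s (by simp only [mem_range] at hs; omega)]

lemma conv_zero_left {f : ℕ → F} (g : ℕ → F) {k : ℕ} (h : ∀ t ≤ k, f t = 0) :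
    conv f g k = 0 := by
  unfold conv
  refine Finset.sum_eq_zero fun s hs => ?_
  rw [h s (by simp only [mem_range] at hs; omega), zero_mul]

lemma conv_add (f g h : ℕ → F) (k : ℕ) :
    conv f (fun t => g t + h t) k = conv f g k + conv f h k := by
  unfold conv
  simp [mul_add, Finset.sum_add_distrib]

lemma conv_del (f : ℕ → F) (k : ℕ) :
    (∑ u ∈ range (k+1), f u * del (k - u)) = f k := by
  rw [Finset.sum_eq_single_of_mem k (self_mem_range_succ k)]
  · simp [del]
  · intro u hu hne
    have : k - u ≠ 0 := by simp at hu; omega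
    simp [del, this]

lemma sum_range_extend (f : ℕ → F) (a b : ℕ) (h : a ≤ b) :
    ∑ u ∈ range a, f u = ∑ u ∈ range b, if u < a then f u else 0 := by
  rw [← Finset.sum_filter]
  congr 1
  ext u
  simp only [mem_filter, mem_range]
  omega

/-- swap lemma -/
lemma conv_swap (f g h : ℕ → F) (k : ℕ) :
    conv f (fun t => conv g h t) k = ∑ u ∈ range (k+1), g u * conv f h (k - u) := by
  unfold conv
  have L : ∀ s ∈ range (k+1), f s * ∑ u ∈ range (k - s + 1), g u * h (k - s - u)
      = ∑ u ∈ range (k+1), (if u < k - s + 1 then f s * (g u * h (k - s - u)) else 0) := by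
    intro s hs
    rw [Finset.mul_sum, sum_range_extend (fun u => f s * (g u * h (k - s - u))) (k - s + 1) (k+1) (by simp at hs; omega)]
  rw [Finset.sum_congr rfl L, Finset.sum_comm]
  refine Finset.sum_congr rfl fun u hu => ?_
  rw [Finset.mul_sum, sum_range_extend (fun s => g u * (f s * h (k - u - s))) (k - u + 1) (k+1) (by simp at hu; omega)]
  refine Finset.sum_congr rfl fun s hs => ?_
  simp only [mem_range] at hu hs
  by_cases hc : u < k - s + 1
  · have hc' : s < k - u + 1 := by omega
    have he : k - s - u = k - u - s := by omega
    rw [if_pos hc, if_pos hc', he]; ring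
  · have hc' : ¬ s < k - u + 1 := by omega
    rw [if_neg hc, if_neg hc']

/-- shift-if distribution -/
lemma shift_if (f g : ℕ → F) (δ k : ℕ) :
    (if δ ≤ k then ∑ u ∈ range (k - δ + 1), f u * g (k - δ - u) else 0)
    = ∑ u ∈ range (k+1), f u * (if δ ≤ k - u then g (k - u - δ) else 0) := by
  by_cases hδ : δ ≤ k
  · rw [if_pos hδ, sum_range_extend (fun u => f u * g (k - δ - u)) (k - δ + 1) (k+1) (by omega)]
    refine Finset.sum_congr rfl fun u hu => ?_
    simp only [mem_range] at hu
    by_cases hc : u < k - δ + 1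
    · have hc' : δ ≤ k - u := by omega
      have he : k - δ - u = k - u - δ := by omega
      rw [if_pos hc, if_pos hc', he]
    · have hc' : ¬ δ ≤ k - u := by omega
      rw [if_neg hc, if_neg hc', mul_zero]
  · rw [if_neg hδ]
    symm
    refine Finset.sum_eq_zero fun u hu => ?_
    simp only [mem_range] at hu
    have : ¬ δ ≤ k - u := by omega
    rw [if_neg this, mul_zero]

/-- leading-zero convolution -/
lemma conv_lead {b : ℕ → F} (w : ℕ → F) {K : ℕ} (hb : ∀ u, u < K → b u = 0) {t : ℕ} (ht : t ≤ K) :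
    conv b w t = if t = K then b K * w 0 else 0 := by
  unfold conv
  by_cases h : t = K
  · subst h
    rw [if_pos rfl, Finset.sum_eq_single_of_mem t (self_mem_range_succ t)]
    · simp
    · intro u hu hne
      simp only [mem_range] at hu
      rw [hb u (by omega), zero_mul]
  · rw [if_neg h]
    refine Finset.sum_eq_zero fun u hu => ?_
    simp only [mem_range] at hu
    rw [hb u (by omega), zero_mul]

lemma conv_single (f : ℕ → F) (C : F) (K k : ℕ) (hk : k ≤ K) :
    conv f (fun t => if t = K then C else 0) k = if k = K then f 0 * C else 0 := by
  unfold conv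
  by_cases h : k = K
  · subst h
    rw [if_pos rfl, Finset.sum_eq_single_of_mem 0 (by simp)]
    · simp
    · intro u hu hne
      simp only [mem_range] at hu
      have : ¬ (k - u = k) := by omega
      simp only [this, if_false, mul_zero]
  · rw [if_neg h]
    refine Finset.sum_eq_zero fun u hu => ?_
    simp only [mem_range] at hu
    have : ¬ (k - u = K) := by omega
    simp only [this, if_false, mul_zero]

lemma convAux (f g : ℕ → F) (i l N : ℕ) (hl : l < N) :
    ∑ j ∈ Finset.range N, (if i ≤ j then f (j - i) else 0) * (if j ≤ l then g (l - j) else 0)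
    = if i ≤ l then conv f g (l - i) else 0 := by
  by_cases hil : i ≤ l
  · rw [if_pos hil]
    have h1 : ∑ j ∈ Finset.range N, (if i ≤ j then f (j - i) else 0) * (if j ≤ l then g (l - j) else 0)
        = ∑ j ∈ Finset.Icc i l, (if i ≤ j then f (j - i) else 0) * (if j ≤ l then g (l - j) else 0) := by
      symm
      apply Finset.sum_subset
      · intro j hj
        simp only [Finset.mem_Icc] at hj
        simp only [Finset.mem_range]; omega
      · intro j _ hj2
        simp only [Finset.mem_Icc] at hj2
        push_neg at hj2
        by_cases h : i ≤ j
        · have : ¬ j ≤ l := by omega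
          rw [if_neg this, mul_zero]
        · rw [if_neg h, zero_mul]
    rw [h1]
    have h2 : ∑ j ∈ Finset.Icc i l, (if i ≤ j then f (j - i) else 0) * (if j ≤ l then g (l - j) else 0)
        = ∑ j ∈ Finset.Icc i l, f (j - i) * g (l - j) := by
      refine Finset.sum_congr rfl fun j hj => ?_
      simp only [Finset.mem_Icc] at hj
      rw [if_pos hj.1, if_pos hj.2]
    rw [h2, ← Finset.Ico_add_one_right_eq_Icc, Finset.sum_Ico_eq_sum_range]
    unfold conv
    have : l + 1 - i = l - i + 1 := by omega
    rw [this]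
    refine Finset.sum_congr rfl fun s _ => ?_
    congr 2 <;> omega
  · rw [if_neg hil]
    refine Finset.sum_eq_zero fun j _ => ?_
    by_cases h : i ≤ j
    · have : ¬ j ≤ l := by omega
      rw [if_neg this, mul_zero]
    · rw [if_neg h, zero_mul]

/-- variant with shift in the second factor -/
lemma convAuxShift (f g : ℕ → F) (i l N δ : ℕ) (hl : l - δ < N) :
    ∑ j ∈ Finset.range N, (if i ≤ j then f (j - i) else 0) * (if j + δ ≤ l then g (l - j - δ) else 0)
    = if δ ≤ l then (if i ≤ l - δ then conv f g (l - δ - i) else 0) else 0 := by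
  by_cases hδ : δ ≤ l
  · rw [if_pos hδ, ← convAux f g i (l - δ) N hl]
    refine Finset.sum_congr rfl fun j _ => ?_
    congr 1
    by_cases h : j + δ ≤ l
    · rw [if_pos h, if_pos (by omega : j ≤ l - δ)]
      congr 1; omega
    · rw [if_neg h, if_neg (by omega : ¬ j ≤ l - δ)]
  · rw [if_neg hδ]
    refine Finset.sum_eq_zero fun j _ => ?_
    have : ¬ j + δ ≤ l := by omega
    rw [if_neg this, mul_zero]

/-- variant with shift in the first factor -/
lemma convAuxShift' (f g : ℕ → F) (i l N δ : ℕ) (hl : l < N) :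
    ∑ j ∈ Finset.range N, (if i + δ ≤ j then f (j - i - δ) else 0) * (if j ≤ l then g (l - j) else 0)
    = if i + δ ≤ l then conv f g (l - i - δ) else 0 := by
  have h0 : ∀ j : ℕ, (if i + δ ≤ j then f (j - i - δ) else 0) = (if i + δ ≤ j then f (j - (i + δ)) else 0) := by
    intro j; rw [Nat.sub_sub]
  simp only [h0, Nat.sub_sub]
  exact convAux f g (i + δ) l N hl

lemma TAmat_mul (m n : ℕ) (hmn : n ≤ m) (hn : 1 ≤ n) (a b c d x y z w : ℕ → F) :
    TAmat m n a b c d * TAmat m n x y z w =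
    TAmat m n (fun k => conv a x k + if m - n ≤ k then conv b z (k - (m-n)) else 0)
              (fun k => conv a y k + conv b w k)
              (fun k => conv c x k + conv d z k)
              (fun k => conv d w k + if m - n ≤ k then conv c y (k - (m-n)) else 0) := by
  set δ := m - n with hδ
  ext p q
  rw [Matrix.mul_apply]
  cases p with
  | inl i =>
    cases q with
    | inl l =>
      rw [Fintype.sum_sum_type]
      show (∑ j : Fin m, (if (i:ℕ) ≤ (j:ℕ) then a ((j:ℕ) - i) else 0) * (if (j:ℕ) ≤ (l:ℕ) then x ((l:ℕ) - j) else 0))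
        + (∑ j : Fin n, (if (i:ℕ) ≤ (j:ℕ) then b ((j:ℕ) - i) else 0) * (if (j:ℕ) + δ ≤ (l:ℕ) then z ((l:ℕ) - j - δ) else 0))
        = if (i:ℕ) ≤ (l:ℕ) then conv a x ((l:ℕ) - i) + (if δ ≤ (l:ℕ) - i then conv b z ((l:ℕ) - i - δ) else 0) else 0
      rw [Fin.sum_univ_eq_sum_range (fun jn => (if (i:ℕ) ≤ jn then a (jn - i) else 0) * (if jn ≤ (l:ℕ) then x ((l:ℕ) - jn) else 0)) m,
        Fin.sum_univ_eq_sum_range (fun jn => (if (i:ℕ) ≤ jn then b (jn - i) else 0) * (if jn + δ ≤ (l:ℕ) then z ((l:ℕ) - jn - δ) else 0)) n,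
        convAux a x i l m l.isLt,
        convAuxShift b z i l n δ (by have := l.isLt; omega)]
      by_cases h1 : (i:ℕ) ≤ l
      · rw [if_pos h1, if_pos h1]
        by_cases h2 : δ ≤ (l:ℕ) - i
        · rw [if_pos h2, if_pos (by omega : δ ≤ (l:ℕ)), if_pos (by omega : (i:ℕ) ≤ (l:ℕ) - δ)]
          have : (l:ℕ) - δ - i = (l:ℕ) - i - δ := by omega
          rw [this]
        · rw [if_neg h2]
          by_cases h3 : δ ≤ (l:ℕ)
          · rw [if_pos h3, if_neg (by omega : ¬ (i:ℕ) ≤ (l:ℕ) - δ)]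
          · rw [if_neg h3]
      · rw [if_neg h1, if_neg h1]
        by_cases h3 : δ ≤ (l:ℕ)
        · rw [if_pos h3, if_neg (by omega : ¬ (i:ℕ) ≤ (l:ℕ) - δ)]
          simp
        · rw [if_neg h3]
          simp
    | inr l =>
      rw [Fintype.sum_sum_type]
      show (∑ j : Fin m, (if (i:ℕ) ≤ (j:ℕ) then a ((j:ℕ) - i) else 0) * (if (j:ℕ) ≤ (l:ℕ) then y ((l:ℕ) - j) else 0))
        + (∑ j : Fin n, (if (i:ℕ) ≤ (j:ℕ) then b ((j:ℕ) - i) else 0) * (if (j:ℕ) ≤ (l:ℕ) then w ((l:ℕ) - j) else 0))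
        = if (i:ℕ) ≤ (l:ℕ) then conv a y ((l:ℕ) - i) + conv b w ((l:ℕ) - i) else 0
      rw [Fin.sum_univ_eq_sum_range (fun jn => (if (i:ℕ) ≤ jn then a (jn - i) else 0) * (if jn ≤ (l:ℕ) then y ((l:ℕ) - jn) else 0)) m,
        Fin.sum_univ_eq_sum_range (fun jn => (if (i:ℕ) ≤ jn then b (jn - i) else 0) * (if jn ≤ (l:ℕ) then w ((l:ℕ) - jn) else 0)) n,
        convAux a y i l m (by have := l.isLt; omega),
        convAux b w i l n l.isLt]
      by_cases h1 : (i:ℕ) ≤ l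
      · rw [if_pos h1, if_pos h1, if_pos h1]
      · rw [if_neg h1, if_neg h1, if_neg h1]; simp
  | inr i =>
    cases q with
    | inl l =>
      rw [Fintype.sum_sum_type]
      show (∑ j : Fin m, (if (i:ℕ) + δ ≤ (j:ℕ) then c ((j:ℕ) - i - δ) else 0) * (if (j:ℕ) ≤ (l:ℕ) then x ((l:ℕ) - j) else 0))
        + (∑ j : Fin n, (if (i:ℕ) ≤ (j:ℕ) then d ((j:ℕ) - i) else 0) * (if (j:ℕ) + δ ≤ (l:ℕ) then z ((l:ℕ) - j - δ) else 0))
        = if (i:ℕ) + δ ≤ (l:ℕ) then conv c x ((l:ℕ) - i - δ) + conv d z ((l:ℕ) - i - δ) else 0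
      rw [Fin.sum_univ_eq_sum_range (fun jn => (if (i:ℕ) + δ ≤ jn then c (jn - i - δ) else 0) * (if jn ≤ (l:ℕ) then x ((l:ℕ) - jn) else 0)) m,
        Fin.sum_univ_eq_sum_range (fun jn => (if (i:ℕ) ≤ jn then d (jn - i) else 0) * (if jn + δ ≤ (l:ℕ) then z ((l:ℕ) - jn - δ) else 0)) n,
        convAuxShift' c x i l m δ l.isLt,
        convAuxShift d z i l n δ (by have := l.isLt; omega)]
      by_cases h1 : (i:ℕ) + δ ≤ l
      · rw [if_pos h1, if_pos (by omega : δ ≤ (l:ℕ)), if_pos (by omega : (i:ℕ) ≤ (l:ℕ) - δ), if_pos h1]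
        have : (l:ℕ) - δ - i = (l:ℕ) - i - δ := by omega
        rw [this]
      · rw [if_neg h1, if_neg h1]
        by_cases h3 : δ ≤ (l:ℕ)
        · rw [if_pos h3, if_neg (by omega : ¬ (i:ℕ) ≤ (l:ℕ) - δ)]
          simp
        · rw [if_neg h3]
          simp
    | inr l =>
      rw [Fintype.sum_sum_type]
      show (∑ j : Fin m, (if (i:ℕ) + δ ≤ (j:ℕ) then c ((j:ℕ) - i - δ) else 0) * (if (j:ℕ) ≤ (l:ℕ) then y ((l:ℕ) - j) else 0))
        + (∑ j : Fin n, (if (i:ℕ) ≤ (j:ℕ) then d ((j:ℕ) - i) else 0) * (if (j:ℕ) ≤ (l:ℕ) then w ((l:ℕ) - j) else 0))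
        = if (i:ℕ) ≤ (l:ℕ) then conv d w ((l:ℕ) - i) + (if δ ≤ (l:ℕ) - i then conv c y ((l:ℕ) - i - δ) else 0) else 0
      rw [Fin.sum_univ_eq_sum_range (fun jn => (if (i:ℕ) + δ ≤ jn then c (jn - i - δ) else 0) * (if jn ≤ (l:ℕ) then y ((l:ℕ) - jn) else 0)) m,
        Fin.sum_univ_eq_sum_range (fun jn => (if (i:ℕ) ≤ jn then d (jn - i) else 0) * (if jn ≤ (l:ℕ) then w ((l:ℕ) - jn) else 0)) n,
        convAuxShift' c y i l m δ (by have := l.isLt; omega),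
        convAux d w i l n l.isLt]
      by_cases h1 : (i:ℕ) ≤ l
      · by_cases h2 : δ ≤ (l:ℕ) - i
        · rw [if_pos (by omega : (i:ℕ) + δ ≤ (l:ℕ)), if_pos h1, if_pos h1, if_pos h2]
          ring
        · rw [if_neg (by omega : ¬ (i:ℕ) + δ ≤ (l:ℕ)), if_pos h1, if_pos h1, if_neg h2]
          ring
      · rw [if_neg (by omega : ¬ (i:ℕ) + δ ≤ (l:ℕ)), if_neg h1, if_neg h1]
        simp

lemma TAmat_one (m n : ℕ) :
    TAmat (F := F) m n del (fun _ => 0) (fun _ => 0) del = 1 := by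
  ext p q
  cases p with
  | inl i =>
    cases q with
    | inl j =>
      show (if (i:ℕ) ≤ (j:ℕ) then del ((j:ℕ) - i) else 0) = _
      rw [Matrix.one_apply]
      rcases eq_or_ne i j with rfl | h
      · simp [del]
      · have : ¬ Sum.inl (β := Fin n) i = Sum.inl j := by simp [h]
        rw [if_neg this]
        have h' : (i:ℕ) ≠ (j:ℕ) := fun hc => h (Fin.ext hc)
        by_cases hle : (i:ℕ) ≤ j
        · rw [if_pos hle]; simp [del]; omega
        · rw [if_neg hle]
    | inr j =>
      show (if (i:ℕ) ≤ (j:ℕ) then (0:F) else 0) = _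
      rw [Matrix.one_apply]
      simp
  | inr i =>
    cases q with
    | inl j =>
      show (if (i:ℕ) + (m-n) ≤ (j:ℕ) then (0:F) else 0) = _
      rw [Matrix.one_apply]
      simp
    | inr j =>
      show (if (i:ℕ) ≤ (j:ℕ) then del ((j:ℕ) - i) else 0) = _
      rw [Matrix.one_apply]
      rcases eq_or_ne i j with rfl | h
      · simp [del]
      · have : ¬ Sum.inr (α := Fin m) i = Sum.inr j := by simp [h]
        rw [if_neg this]
        have h' : (i:ℕ) ≠ (j:ℕ) := fun hc => h (Fin.ext hc)
        by_cases hle : (i:ℕ) ≤ j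
        · rw [if_pos hle]; simp [del]; omega
        · rw [if_neg hle]

/-- simultaneous recursion computing the (x', y') parameters of the left
inverse of a TA matrix -/
def invXY (δ : ℕ) (x y z w : ℕ → F) (k : ℕ) : F × F :=
  let px : ℕ → F := fun s => if h : s < k then (invXY δ x y z w s).1 else 0
  let py : ℕ → F := fun s => if h : s < k then (invXY δ x y z w s).2 else 0
  let xk : F := (x 0)⁻¹ * (del k - (∑ s ∈ range k, px s * x (k - s)) -
    (if δ ≤ k ∧ 0 < δ then ∑ s ∈ range (k - δ + 1), py s * z (k - δ - s) else 0))
  let yk : F := (w 0)⁻¹ * (0 - (∑ s ∈ range k, px s * y (k - s)) - xk * y 0 -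
    ∑ s ∈ range k, py s * w (k - s))
  (xk, yk)
termination_by k

def invZW (δ : ℕ) (x y z w : ℕ → F) (k : ℕ) : F × F :=
  let pz : ℕ → F := fun s => if h : s < k then (invZW δ x y z w s).1 else 0
  let pw : ℕ → F := fun s => if h : s < k then (invZW δ x y z w s).2 else 0
  let wk : F := (w 0)⁻¹ * (del k - (∑ s ∈ range k, pw s * w (k - s)) -
    (if δ ≤ k ∧ 0 < δ then ∑ s ∈ range (k - δ + 1), pz s * y (k - δ - s) else 0))
  let zk : F := (x 0)⁻¹ * (0 - (∑ s ∈ range k, pz s * x (k - s)) - wk * z 0 -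
    ∑ s ∈ range k, pw s * z (k - s))
  (zk, wk)
termination_by k



variable {F : Type*} [Field F]

variable {F : Type*} [Field F]

def xi (δ : ℕ) (x y z w : ℕ → F) : ℕ → F := fun k => (invXY δ x y z w k).1
def yi (δ : ℕ) (x y z w : ℕ → F) : ℕ → F := fun k => (invXY δ x y z w k).2
variable (δ : ℕ) (x y z w : ℕ → F)

lemma invXY_eq (k : ℕ) : invXY δ x y z w k =
    ( (x 0)⁻¹ * (del k - (∑ s ∈ range k, xi δ x y z w s * x (k - s)) -
        (if δ ≤ k ∧ 0 < δ then ∑ s ∈ range (k - δ + 1), yi δ x y z w s * z (k - δ - s) else 0)),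
      (w 0)⁻¹ * (0 - (∑ s ∈ range k, xi δ x y z w s * y (k - s)) -
        ((x 0)⁻¹ * (del k - (∑ s ∈ range k, xi δ x y z w s * x (k - s)) -
          (if δ ≤ k ∧ 0 < δ then ∑ s ∈ range (k - δ + 1), yi δ x y z w s * z (k - δ - s) else 0))) * y 0 -
        ∑ s ∈ range k, yi δ x y z w s * w (k - s)) ) := by
  rw [invXY]
  have e1 : (∑ s ∈ range k, (if h : s < k then (invXY δ x y z w s).1 else 0) * x (k - s))
      = ∑ s ∈ range k, xi δ x y z w s * x (k - s) :=
    Finset.sum_congr rfl fun s hs => by rw [dif_pos (Finset.mem_range.mp hs)]; rfl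
  have e3 : (∑ s ∈ range k, (if h : s < k then (invXY δ x y z w s).1 else 0) * y (k - s))
      = ∑ s ∈ range k, xi δ x y z w s * y (k - s) :=
    Finset.sum_congr rfl fun s hs => by rw [dif_pos (Finset.mem_range.mp hs)]; rfl
  have e4 : (∑ s ∈ range k, (if h : s < k then (invXY δ x y z w s).2 else 0) * w (k - s))
      = ∑ s ∈ range k, yi δ x y z w s * w (k - s) :=
    Finset.sum_congr rfl fun s hs => by rw [dif_pos (Finset.mem_range.mp hs)]; rfl
  have e2 : (if δ ≤ k ∧ 0 < δ then ∑ s ∈ range (k - δ + 1), (if h : s < k then (invXY δ x y z w s).2 else 0) * z (k - δ - s) else 0)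
      = (if δ ≤ k ∧ 0 < δ then ∑ s ∈ range (k - δ + 1), yi δ x y z w s * z (k - δ - s) else 0) := by
    split_ifs with h
    · exact Finset.sum_congr rfl fun s hs => by
        rw [dif_pos (by have := Finset.mem_range.mp hs; omega)]; rfl
    · rfl
  rw [e1, e2, e3, e4]

set_option linter.unusedVariables false


variable {F : Type*} [Field F]

def zi (δ : ℕ) (x y z w : ℕ → F) : ℕ → F := fun k => (invZW δ x y z w k).1
def wi (δ : ℕ) (x y z w : ℕ → F) : ℕ → F := fun k => (invZW δ x y z w k).2

variable (δ : ℕ) (x y z w : ℕ → F)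

lemma invZW_eq (k : ℕ) : invZW δ x y z w k =
    ( (x 0)⁻¹ * (0 - (∑ s ∈ range k, zi δ x y z w s * x (k - s)) -
        ((w 0)⁻¹ * (del k - (∑ s ∈ range k, wi δ x y z w s * w (k - s)) -
          (if δ ≤ k ∧ 0 < δ then ∑ s ∈ range (k - δ + 1), zi δ x y z w s * y (k - δ - s) else 0))) * z 0 -
        ∑ s ∈ range k, wi δ x y z w s * z (k - s)),
      (w 0)⁻¹ * (del k - (∑ s ∈ range k, wi δ x y z w s * w (k - s)) -
        (if δ ≤ k ∧ 0 < δ then ∑ s ∈ range (k - δ + 1), zi δ x y z w s * y (k - δ - s) else 0)) ) := by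
  rw [invZW]
  have e1 : (∑ s ∈ range k, (if h : s < k then (invZW δ x y z w s).2 else 0) * w (k - s))
      = ∑ s ∈ range k, wi δ x y z w s * w (k - s) :=
    Finset.sum_congr rfl fun s hs => by rw [dif_pos (Finset.mem_range.mp hs)]; rfl
  have e3 : (∑ s ∈ range k, (if h : s < k then (invZW δ x y z w s).1 else 0) * x (k - s))
      = ∑ s ∈ range k, zi δ x y z w s * x (k - s) :=
    Finset.sum_congr rfl fun s hs => by rw [dif_pos (Finset.mem_range.mp hs)]; rfl
  have e4 : (∑ s ∈ range k, (if h : s < k then (invZW δ x y z w s).2 else 0) * z (k - s))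
      = ∑ s ∈ range k, wi δ x y z w s * z (k - s) :=
    Finset.sum_congr rfl fun s hs => by rw [dif_pos (Finset.mem_range.mp hs)]; rfl
  have e2 : (if δ ≤ k ∧ 0 < δ then ∑ s ∈ range (k - δ + 1), (if h : s < k then (invZW δ x y z w s).1 else 0) * y (k - δ - s) else 0)
      = (if δ ≤ k ∧ 0 < δ then ∑ s ∈ range (k - δ + 1), zi δ x y z w s * y (k - δ - s) else 0) := by
    split_ifs with h
    · exact Finset.sum_congr rfl fun s hs => by
        rw [dif_pos (by have := Finset.mem_range.mp hs; omega)]; rfl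
    · rfl
  rw [e1, e2, e3, e4]

lemma xi_eq (k : ℕ) : xi δ x y z w k =
    (x 0)⁻¹ * (del k - (∑ s ∈ range k, xi δ x y z w s * x (k - s)) -
      (if δ ≤ k ∧ 0 < δ then ∑ s ∈ range (k - δ + 1), yi δ x y z w s * z (k - δ - s) else 0)) :=
  congrArg Prod.fst (invXY_eq δ x y z w k)

lemma yi_eq (k : ℕ) : yi δ x y z w k =
    (w 0)⁻¹ * (0 - (∑ s ∈ range k, xi δ x y z w s * y (k - s)) -
      xi δ x y z w k * y 0 - ∑ s ∈ range k, yi δ x y z w s * w (k - s)) := by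
  have h := congrArg Prod.snd (invXY_eq δ x y z w k)
  rw [← xi_eq δ x y z w k] at h
  exact h

lemma wi_eq (k : ℕ) : wi δ x y z w k =
    (w 0)⁻¹ * (del k - (∑ s ∈ range k, wi δ x y z w s * w (k - s)) -
      (if δ ≤ k ∧ 0 < δ then ∑ s ∈ range (k - δ + 1), zi δ x y z w s * y (k - δ - s) else 0)) :=
  congrArg Prod.snd (invZW_eq δ x y z w k)

lemma zi_eq (k : ℕ) : zi δ x y z w k =
    (x 0)⁻¹ * (0 - (∑ s ∈ range k, zi δ x y z w s * x (k - s)) -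
      wi δ x y z w k * z 0 - ∑ s ∈ range k, wi δ x y z w s * z (k - s)) := by
  have h := congrArg Prod.fst (invZW_eq δ x y z w k)
  rw [← wi_eq δ x y z w k] at h
  exact h

lemma xi_zero : xi δ x y z w 0 = (x 0)⁻¹ := by
  have h : ¬ (δ = 0 ∧ 0 < δ) := by omega
  rw [xi_eq]
  simp [del, h]

lemma wi_zero : wi δ x y z w 0 = (w 0)⁻¹ := by
  have h : ¬ (δ = 0 ∧ 0 < δ) := by omega
  rw [wi_eq]
  simp [del, h]

lemma I1 (hδ : 0 < δ) (hx : x 0 ≠ 0) (k : ℕ) :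
    conv (xi δ x y z w) x k + (if δ ≤ k then conv (yi δ x y z w) z (k - δ) else 0) = del k := by
  have exi := xi_eq δ x y z w k
  have e2 : (if δ ≤ k ∧ 0 < δ then ∑ s ∈ range (k - δ + 1), yi δ x y z w s * z (k - δ - s) else 0)
      = (if δ ≤ k then conv (yi δ x y z w) z (k - δ) else 0) := by
    by_cases h : δ ≤ k
    · rw [if_pos (And.intro h hδ), if_pos h]; rfl
    · rw [if_neg (fun hc => h hc.1), if_neg h]
  rw [e2] at exi
  rw [conv, Finset.sum_range_succ, Nat.sub_self, exi]
  set A := ∑ s ∈ range k, xi δ x y z w s * x (k - s) with hA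
  set B := if δ ≤ k then conv (yi δ x y z w) z (k - δ) else 0 with hB
  field_simp
  ring

lemma I2 (hw : w 0 ≠ 0) (k : ℕ) :
    conv (xi δ x y z w) y k + conv (yi δ x y z w) w k = 0 := by
  rw [conv, Finset.sum_range_succ, Nat.sub_self, conv, Finset.sum_range_succ, Nat.sub_self,
    yi_eq]
  field_simp
  ring

lemma I3 (hx : x 0 ≠ 0) (k : ℕ) :
    conv (zi δ x y z w) x k + conv (wi δ x y z w) z k = 0 := by
  rw [conv, Finset.sum_range_succ, Nat.sub_self, conv, Finset.sum_range_succ, Nat.sub_self,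
    zi_eq]
  field_simp
  ring

lemma I4 (hδ : 0 < δ) (hw : w 0 ≠ 0) (k : ℕ) :
    conv (wi δ x y z w) w k + (if δ ≤ k then conv (zi δ x y z w) y (k - δ) else 0) = del k := by
  have ewi := wi_eq δ x y z w k
  have e2 : (if δ ≤ k ∧ 0 < δ then ∑ s ∈ range (k - δ + 1), zi δ x y z w s * y (k - δ - s) else 0)
      = (if δ ≤ k then conv (zi δ x y z w) y (k - δ) else 0) := by
    by_cases h : δ ≤ k
    · rw [if_pos (And.intro h hδ), if_pos h]; rfl
    · rw [if_neg (fun hc => h hc.1), if_neg h]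
  rw [e2] at ewi
  rw [conv, Finset.sum_range_succ, Nat.sub_self, ewi]
  set A := ∑ s ∈ range k, wi δ x y z w s * w (k - s) with hA
  set B := if δ ≤ k then conv (zi δ x y z w) y (k - δ) else 0 with hB
  field_simp
  ring


lemma SBkey (δ K k : ℕ) (a b c d x y z w x' y' z' w' : ℕ → F) (hδ : 0 < δ) (hk : k ≤ K)
    (hb : ∀ u, u < K → b u = 0) (hc : ∀ u, u < K → c u = 0)
    (hda : ∀ u, u ≤ K → d u = a u)
    (hI2 : ∀ j, conv x' y j + conv y' w j = 0) :
    conv x' (fun t => conv a y t + conv b w t) k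
      + conv y' (fun t => conv d w t + if δ ≤ t then conv c y (t - δ) else 0) k
    = if k = K then x' 0 * (b K * w 0) else 0 := by
  have h1 : conv x' (fun t => conv a y t + conv b w t) k
      = conv x' (fun t => conv a y t) k + (if k = K then x' 0 * (b K * w 0) else 0) := by
    rw [conv_congr (g' := fun t => conv a y t + (if t = K then b K * w 0 else 0))
        (fun t ht => by rw [conv_lead w hb (le_trans ht hk)]),
      conv_add, conv_single x' (b K * w 0) K k hk]
  have h2 : conv y' (fun t => conv d w t + if δ ≤ t then conv c y (t - δ) else 0) k
      = conv y' (fun t => conv a w t) k := by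
    apply conv_congr
    intro t ht
    have hd : conv d w t = conv a w t :=
      conv_congr_left (fun u hu => hda u (le_trans hu (le_trans ht hk)))
    have hcy : (if δ ≤ t then conv c y (t - δ) else 0) = 0 := by
      by_cases h : δ ≤ t
      · rw [if_pos h]
        exact conv_zero_left y (fun u hu => hc u (by omega))
      · rw [if_neg h]
    rw [hd, hcy, add_zero]
  have h3 : conv x' (fun t => conv a y t) k + conv y' (fun t => conv a w t) k = 0 := by
    rw [conv_swap, conv_swap, ← Finset.sum_add_distrib]
    apply Finset.sum_eq_zero
    intro u _
    rw [← mul_add, hI2 (k - u), mul_zero]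
  rw [h1, h2, add_right_comm, h3, zero_add]

lemma SCkey (δ K k : ℕ) (a b c d x y z w x' y' z' w' : ℕ → F) (hδ : 0 < δ) (hk : k ≤ K)
    (hb : ∀ u, u < K → b u = 0) (hc : ∀ u, u < K → c u = 0)
    (hda : ∀ u, u ≤ K → d u = a u)
    (hI3 : ∀ j, conv z' x j + conv w' z j = 0) :
    conv z' (fun t => conv a x t + if δ ≤ t then conv b z (t - δ) else 0) k
      + conv w' (fun t => conv c x t + conv d z t) k
    = if k = K then w' 0 * (c K * x 0) else 0 := by
  have h1 : conv z' (fun t => conv a x t + if δ ≤ t then conv b z (t - δ) else 0) k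
      = conv z' (fun t => conv a x t) k := by
    apply conv_congr
    intro t ht
    have hbz : (if δ ≤ t then conv b z (t - δ) else 0) = 0 := by
      by_cases h : δ ≤ t
      · rw [if_pos h]
        exact conv_zero_left z (fun u hu => hb u (by omega))
      · rw [if_neg h]
    rw [hbz, add_zero]
  have h2 : conv w' (fun t => conv c x t + conv d z t) k
      = conv w' (fun t => conv a z t) k + (if k = K then w' 0 * (c K * x 0) else 0) := by
    rw [conv_congr (g' := fun t => (if t = K then c K * x 0 else 0) + conv a z t)
        (fun t ht => by
          rw [conv_lead x hc (le_trans ht hk),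
            conv_congr_left (fun u hu => hda u (le_trans hu (le_trans ht hk)))]),
      conv_add, conv_single w' (c K * x 0) K k hk]
    ring
  have h3 : conv z' (fun t => conv a x t) k + conv w' (fun t => conv a z t) k = 0 := by
    rw [conv_swap, conv_swap, ← Finset.sum_add_distrib]
    apply Finset.sum_eq_zero
    intro u _
    rw [← mul_add, hI3 (k - u), mul_zero]
  rw [h1, h2, ← add_assoc, h3, zero_add]

lemma SAkey (δ K k : ℕ) (a b c d x y z w x' y' z' w' : ℕ → F) (hδ : 0 < δ) (hk : k ≤ K)
    (hb : ∀ u, u < K → b u = 0) (hc : ∀ u, u < K → c u = 0)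
    (hda : ∀ u, u ≤ K → d u = a u)
    (hI1 : ∀ j, conv x' x j + (if δ ≤ j then conv y' z (j - δ) else 0) = del j) :
    conv x' (fun t => conv a x t + if δ ≤ t then conv b z (t - δ) else 0) k
      + (if δ ≤ k then conv y' (fun t => conv c x t + conv d z t) (k - δ) else 0)
    = a k := by
  have h1 : conv x' (fun t => conv a x t + if δ ≤ t then conv b z (t - δ) else 0) k
      = conv x' (fun t => conv a x t) k := by
    apply conv_congr
    intro t ht
    have hbz : (if δ ≤ t then conv b z (t - δ) else 0) = 0 := by
      by_cases h : δ ≤ t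
      · rw [if_pos h]
        exact conv_zero_left z (fun u hu => hb u (by omega))
      · rw [if_neg h]
    rw [hbz, add_zero]
  have h2 : (if δ ≤ k then conv y' (fun t => conv c x t + conv d z t) (k - δ) else 0)
      = (if δ ≤ k then conv y' (fun t => conv a z t) (k - δ) else 0) := by
    by_cases h : δ ≤ k
    · rw [if_pos h, if_pos h]
      apply conv_congr
      intro t ht
      have hcx : conv c x t = 0 := conv_zero_left x (fun u hu => hc u (by omega))
      have hdz : conv d z t = conv a z t :=
        conv_congr_left (fun u hu => hda u (by omega))
      rw [hcx, hdz, zero_add]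
    · rw [if_neg h, if_neg h]
  rw [h1, h2, conv_swap]
  have h3 : (if δ ≤ k then conv y' (fun t => conv a z t) (k - δ) else 0)
      = ∑ u ∈ range (k+1), a u * (if δ ≤ k - u then conv y' z (k - u - δ) else 0) := by
    rw [← shift_if a (fun j => conv y' z j) δ k]
    by_cases h : δ ≤ k
    · rw [if_pos h, if_pos h, conv_swap]
    · rw [if_neg h, if_neg h]
  rw [h3, ← Finset.sum_add_distrib]
  have h4 : ∀ u ∈ range (k+1),
      a u * conv x' x (k - u) + a u * (if δ ≤ k - u then conv y' z (k - u - δ) else 0)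
      = a u * del (k - u) := by
    intro u _
    rw [← mul_add, hI1 (k - u)]
  rw [Finset.sum_congr rfl h4, conv_del]

lemma SDkey (δ K k : ℕ) (a b c d x y z w x' y' z' w' : ℕ → F) (hδ : 0 < δ) (hk : k ≤ K)
    (hb : ∀ u, u < K → b u = 0) (hc : ∀ u, u < K → c u = 0)
    (hda : ∀ u, u ≤ K → d u = a u)
    (hI4 : ∀ j, conv w' w j + (if δ ≤ j then conv z' y (j - δ) else 0) = del j) :
    conv w' (fun t => conv d w t + if δ ≤ t then conv c y (t - δ) else 0) k
      + (if δ ≤ k then conv z' (fun t => conv a y t + conv b w t) (k - δ) else 0)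
    = a k := by
  have h1 : conv w' (fun t => conv d w t + if δ ≤ t then conv c y (t - δ) else 0) k
      = conv w' (fun t => conv a w t) k := by
    apply conv_congr
    intro t ht
    have hcy : (if δ ≤ t then conv c y (t - δ) else 0) = 0 := by
      by_cases h : δ ≤ t
      · rw [if_pos h]
        exact conv_zero_left y (fun u hu => hc u (by omega))
      · rw [if_neg h]
    have hd : conv d w t = conv a w t :=
      conv_congr_left (fun u hu => hda u (le_trans hu (le_trans ht hk)))
    rw [hd, hcy, add_zero]
  have h2 : (if δ ≤ k then conv z' (fun t => conv a y t + conv b w t) (k - δ) else 0)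
      = (if δ ≤ k then conv z' (fun t => conv a y t) (k - δ) else 0) := by
    by_cases h : δ ≤ k
    · rw [if_pos h, if_pos h]
      apply conv_congr
      intro t ht
      have hbw : conv b w t = 0 := conv_zero_left w (fun u hu => hb u (by omega))
      rw [hbw, add_zero]
    · rw [if_neg h, if_neg h]
  rw [h1, h2, conv_swap]
  have h3 : (if δ ≤ k then conv z' (fun t => conv a y t) (k - δ) else 0)
      = ∑ u ∈ range (k+1), a u * (if δ ≤ k - u then conv z' y (k - u - δ) else 0) := by
    rw [← shift_if a (fun j => conv z' y j) δ k]
    by_cases h : δ ≤ k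
    · rw [if_pos h, if_pos h, conv_swap]
    · rw [if_neg h, if_neg h]
  rw [h3, ← Finset.sum_add_distrib]
  have h4 : ∀ u ∈ range (k+1),
      a u * conv w' w (k - u) + a u * (if δ ≤ k - u then conv z' y (k - u - δ) else 0)
      = a u * del (k - u) := by
    intro u _
    rw [← mul_add, hI4 (k - u)]
  rw [Finset.sum_congr rfl h4, conv_del]


end TAaux

open TAaux in
/-- invariance of the canonical rank.  For m > n ≥ 1, let
B ∈ NilC(J_m ⊕ J_n) have canonical rank r ≥ 1, i.e. its Turnbull–Aitken
parameters satisfy (b_{n−r}, c_{n−r}) ≠ (0,0), (bᵢ,cᵢ) = (0,0) for i < n−r and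
dᵢ = aᵢ for 1 ≤ i ≤ n−r.  Then for any X ∈ Stab(A) with diagonal parameters
x₀ ≠ 0, w₀ ≠ 0, the conjugate X⁻¹BX has the same canonical rank r; in
particular its leading off-diagonal parameters are
(b'_{n−r}, c'_{n−r}) = (b_{n−r} w₀ x₀⁻¹, c_{n−r} x₀ w₀⁻¹) ≠ (0,0). -/
theorem canonical_rank_invariant {F : Type*} [Field F] (m n r : ℕ)
    (hmn : m > n) (hn : n ≥ 1) (hr : 1 ≤ r) (hrn : r ≤ n)
    (a b c d : ℕ → F) (ha0 : a 0 = 0) (hd0 : d 0 = 0)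
    (hlead : ¬(b (n - r) = 0 ∧ c (n - r) = 0))
    (hbc : ∀ i : ℕ, i < n - r → b i = 0 ∧ c i = 0)
    (hda : ∀ i : ℕ, 1 ≤ i → i ≤ n - r → d i = a i)
    (hBnil : (TAmat (F := F) m n a b c d) ^ (m + n) = 0)
    (x y z w : ℕ → F) (hx : x 0 ≠ 0) (hw : w 0 ≠ 0) :
    ∃ a' b' c' d' : ℕ → F,
      (TAmat (F := F) m n x y z w)⁻¹ * TAmat m n a b c d * TAmat m n x y z w =
        TAmat m n a' b' c' d' ∧
      a' 0 = 0 ∧ d' 0 = 0 ∧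
      (∀ i : ℕ, i < n - r → b' i = 0 ∧ c' i = 0) ∧
      (∀ i : ℕ, 1 ≤ i → i ≤ n - r → d' i = a' i) ∧
      b' (n - r) = b (n - r) * w 0 * (x 0)⁻¹ ∧
      c' (n - r) = c (n - r) * x 0 * (w 0)⁻¹ ∧
      ¬(b' (n - r) = 0 ∧ c' (n - r) = 0) := by
  have hnm : n ≤ m := le_of_lt hmn
  have hdel : 0 < m - n := by omega
  have hI1 : ∀ j, conv (xi (m-n) x y z w) x j
      + (if m - n ≤ j then conv (yi (m-n) x y z w) z (j - (m-n)) else 0) = del j :=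
    I1 (m-n) x y z w hdel hx
  have hI2 : ∀ j, conv (xi (m-n) x y z w) y j + conv (yi (m-n) x y z w) w j = 0 :=
    I2 (m-n) x y z w hw
  have hI3 : ∀ j, conv (zi (m-n) x y z w) x j + conv (wi (m-n) x y z w) z j = 0 :=
    I3 (m-n) x y z w hx
  have hI4 : ∀ j, conv (wi (m-n) x y z w) w j
      + (if m - n ≤ j then conv (zi (m-n) x y z w) y (j - (m-n)) else 0) = del j :=
    I4 (m-n) x y z w hdel hw
  have hinv : TAmat m n (xi (m-n) x y z w) (yi (m-n) x y z w) (zi (m-n) x y z w)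
      (wi (m-n) x y z w) * TAmat m n x y z w = 1 := by
    rw [TAmat_mul m n hnm hn _ _ _ _ x y z w]
    have ea : (fun k => conv (xi (m-n) x y z w) x k
        + if m - n ≤ k then conv (yi (m-n) x y z w) z (k - (m-n)) else 0) = (del : ℕ → F) :=
      funext hI1
    have eb : (fun k => conv (xi (m-n) x y z w) y k + conv (yi (m-n) x y z w) w k)
        = (fun _ => (0:F)) := funext hI2
    have ec : (fun k => conv (zi (m-n) x y z w) x k + conv (wi (m-n) x y z w) z k)
        = (fun _ => (0:F)) := funext hI3
    have ed : (fun k => conv (wi (m-n) x y z w) w k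
        + if m - n ≤ k then conv (zi (m-n) x y z w) y (k - (m-n)) else 0) = (del : ℕ → F) :=
      funext hI4
    rw [ea, eb, ec, ed, TAmat_one]
  have hXinv : (TAmat m n x y z w)⁻¹ = TAmat m n (xi (m-n) x y z w) (yi (m-n) x y z w)
      (zi (m-n) x y z w) (wi (m-n) x y z w) :=
    Matrix.inv_eq_left_inv hinv
  have hbK : ∀ u, u < n - r → b u = 0 := fun u hu => (hbc u hu).1
  have hcK : ∀ u, u < n - r → c u = 0 := fun u hu => (hbc u hu).2
  have hdaK : ∀ u, u ≤ n - r → d u = a u := by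
    intro u hu
    rcases Nat.eq_zero_or_pos u with rfl | hpos
    · rw [hd0, ha0]
    · exact hda u hpos hu
  have SA : ∀ k, k ≤ n - r → conv (xi (m-n) x y z w)
      (fun t => conv a x t + if m - n ≤ t then conv b z (t - (m-n)) else 0) k
      + (if m - n ≤ k then conv (yi (m-n) x y z w)
          (fun t => conv c x t + conv d z t) (k - (m-n)) else 0) = a k :=
    fun k hk => SAkey (m-n) (n-r) k a b c d x y z w
      (xi (m-n) x y z w) (yi (m-n) x y z w) (zi (m-n) x y z w) (wi (m-n) x y z w)
      hdel hk hbK hcK hdaK hI1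
  have SB : ∀ k, k ≤ n - r → conv (xi (m-n) x y z w)
      (fun t => conv a y t + conv b w t) k
      + conv (yi (m-n) x y z w)
        (fun t => conv d w t + if m - n ≤ t then conv c y (t - (m-n)) else 0) k
      = if k = n - r then xi (m-n) x y z w 0 * (b (n-r) * w 0) else 0 :=
    fun k hk => SBkey (m-n) (n-r) k a b c d x y z w
      (xi (m-n) x y z w) (yi (m-n) x y z w) (zi (m-n) x y z w) (wi (m-n) x y z w)
      hdel hk hbK hcK hdaK hI2
  have SC : ∀ k, k ≤ n - r → conv (zi (m-n) x y z w)
      (fun t => conv a x t + if m - n ≤ t then conv b z (t - (m-n)) else 0) k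
      + conv (wi (m-n) x y z w) (fun t => conv c x t + conv d z t) k
      = if k = n - r then wi (m-n) x y z w 0 * (c (n-r) * x 0) else 0 :=
    fun k hk => SCkey (m-n) (n-r) k a b c d x y z w
      (xi (m-n) x y z w) (yi (m-n) x y z w) (zi (m-n) x y z w) (wi (m-n) x y z w)
      hdel hk hbK hcK hdaK hI3
  have SD : ∀ k, k ≤ n - r → conv (wi (m-n) x y z w)
      (fun t => conv d w t + if m - n ≤ t then conv c y (t - (m-n)) else 0) k
      + (if m - n ≤ k then conv (zi (m-n) x y z w)
          (fun t => conv a y t + conv b w t) (k - (m-n)) else 0) = a k :=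
    fun k hk => SDkey (m-n) (n-r) k a b c d x y z w
      (xi (m-n) x y z w) (yi (m-n) x y z w) (zi (m-n) x y z w) (wi (m-n) x y z w)
      hdel hk hbK hcK hdaK hI4
  refine ⟨fun k => conv (xi (m-n) x y z w)
      (fun t => conv a x t + if m - n ≤ t then conv b z (t - (m-n)) else 0) k
      + (if m - n ≤ k then conv (yi (m-n) x y z w)
          (fun t => conv c x t + conv d z t) (k - (m-n)) else 0),
    fun k => conv (xi (m-n) x y z w) (fun t => conv a y t + conv b w t) k
      + conv (yi (m-n) x y z w)
        (fun t => conv d w t + if m - n ≤ t then conv c y (t - (m-n)) else 0) k,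
    fun k => conv (zi (m-n) x y z w)
      (fun t => conv a x t + if m - n ≤ t then conv b z (t - (m-n)) else 0) k
      + conv (wi (m-n) x y z w) (fun t => conv c x t + conv d z t) k,
    fun k => conv (wi (m-n) x y z w)
      (fun t => conv d w t + if m - n ≤ t then conv c y (t - (m-n)) else 0) k
      + (if m - n ≤ k then conv (zi (m-n) x y z w)
          (fun t => conv a y t + conv b w t) (k - (m-n)) else 0),
    ?_, ?_, ?_, ?_, ?_, ?_, ?_, ?_⟩
  · rw [hXinv, Matrix.mul_assoc, TAmat_mul m n hnm hn a b c d x y z w,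
      TAmat_mul m n hnm hn]
  · exact (SA 0 (Nat.zero_le _)).trans ha0
  · exact (SD 0 (Nat.zero_le _)).trans ha0
  · intro i hi
    exact ⟨(SB i (le_of_lt hi)).trans (if_neg (by omega)),
      (SC i (le_of_lt hi)).trans (if_neg (by omega))⟩
  · intro i _ hi
    exact (SD i hi).trans (SA i hi).symm
  · exact (SB (n-r) le_rfl).trans (by rw [if_pos rfl, xi_zero]; ring)
  · exact (SC (n-r) le_rfl).trans (by rw [if_pos rfl, wi_zero]; ring)
  · rintro ⟨h1, h2⟩
    have h1' := ((SB (n-r) le_rfl).symm.trans h1)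
    have h2' := ((SC (n-r) le_rfl).symm.trans h2)
    rw [if_pos rfl, xi_zero] at h1'
    rw [if_pos rfl, wi_zero] at h2'
    apply hlead
    constructor
    · rcases mul_eq_zero.mp h1' with h | h
      · exact absurd h (inv_ne_zero hx)
      · rcases mul_eq_zero.mp h with h3 | h3
        · exact h3
        · exact absurd h3 hw
    · rcases mul_eq_zero.mp h2' with h | h
      · exact absurd h (inv_ne_zero hw)
      · rcases mul_eq_zero.mp h with h3 | h3
        · exact h3
        · exact absurd h3 hx
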